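/- Let d be a positive integer and let A be a real d×d matrix, B, K, ε real d-vectors, and g ≠ 0 a real scalar gain. Define the nominal closed-loop matrix A_C as the real (d+1)×(d+1) block matrix A_C = [[A + B Kᵀ, g·B], [Kᵀ, 1 + g]]. Let Δ_A be a real d×d matrix and Δ_B a real d-vector representing the modelling uncertainty, and define Δ_{A_C} = [[Δ_A + Δ_B Kᵀ, g·Δ_B], [0, 0]]. Assume there exists an invertible complex matrix V such that V⁻¹ A_C V is diagonal (A_C is diagonalizable), that the spectral radius ρ(A_C) < 1, and that ‖V‖·‖V⁻¹‖·‖Δ_{A_C}‖ < 1 − ρ(A_C), where ‖·‖ denotes the operator norm induced by the Euclidean vector norm. Consider the actual closed-loop dynamics ŷ'_{k+1} = (A + Δ_A) ŷ'_k + (B + Δ_B) û_k, w_{k+1} = w_k + û_k, with control offset û_k = Kᵀ(ŷ'_k − ε) + g·w_k. Then for every initial condition (ŷ'_0, w_0), the trajectory converges: ŷ'_k → 0, w_k → (1/g)·Kᵀε, and û_k → 0 as k → ∞. -/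
import Mathlib

open Matrix Filter
open scoped Matrix.Norms.L2Operator ENNReal NNReal

/-- The operator norm on square complex matrices induced by the Euclidean vector norm. -/
noncomputable def l2OpNorm {n : Type*} [Fintype n] [DecidableEq n] (M : Matrix n n ℂ) : ℝ :=
  ‖Matrix.toEuclideanCLM (𝕜 := ℂ) M‖

/-- The spectral radius of a square complex matrix: the maximum (supremum) modulus of its
eigenvalues. -/
noncomputable def specRad {n : Type*} [Fintype n] (M : Matrix n n ℂ) : ℝ :=
  sSup {r : ℝ | ∃ μ : ℂ, (∃ v : n → ℂ, v ≠ 0 ∧ M.mulVec v = μ • v) ∧ r = ‖μ‖}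

set_option linter.unusedSectionVars false
set_option maxHeartbeats 1000000

section Aux
variable {n : Type*} [Fintype n] [DecidableEq n]


lemma eig_iff_spectrum (M : Matrix n n ℂ) (μ : ℂ) :
    (∃ v : n → ℂ, v ≠ 0 ∧ M.mulVec v = μ • v) ↔ μ ∈ spectrum ℂ M := by
  have halg : ∀ v : n → ℂ, (algebraMap ℂ (Matrix n n ℂ) μ) *ᵥ v = μ • v := by
    intro v
    rw [Algebra.algebraMap_eq_smul_one, smul_mulVec, one_mulVec]
  rw [spectrum.mem_iff, Matrix.isUnit_iff_isUnit_det, isUnit_iff_ne_zero, not_ne_iff,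
    ← Matrix.exists_mulVec_eq_zero_iff]
  constructor
  · rintro ⟨v, hv, hMv⟩
    exact ⟨v, hv, by rw [sub_mulVec, halg, hMv, sub_self]⟩
  · rintro ⟨v, hv, hMv⟩
    refine ⟨v, hv, ?_⟩
    rw [sub_mulVec, halg, sub_eq_zero] at hMv
    exact hMv.symm

-- eigenvalue modulus ≤ l2 op norm
lemma eig_le_norm (M : Matrix n n ℂ) (μ : ℂ) (v : n → ℂ) (hv : v ≠ 0)
    (hMv : M.mulVec v = μ • v) : ‖μ‖ ≤ ‖M‖ := by
  set x : EuclideanSpace ℂ n := (WithLp.equiv 2 _).symm v with hx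
  have hx0 : x ≠ 0 := by
    simpa [hx] using hv
  have h1 : ‖(EuclideanSpace.equiv n ℂ).symm (M *ᵥ v)‖ ≤ ‖M‖ * ‖x‖ := M.l2_opNorm_mulVec x
  rw [hMv] at h1
  have h2 : ‖(EuclideanSpace.equiv n ℂ).symm (μ • v)‖ = ‖μ‖ * ‖x‖ := by
    have : (EuclideanSpace.equiv n ℂ).symm (μ • v) = μ • x := by
      simp [hx, EuclideanSpace.equiv]
    rw [this, norm_smul]
  rw [h2] at h1
  have hxpos : 0 < ‖x‖ := norm_pos_iff.mpr hx0
  exact le_of_mul_le_mul_right h1 hxpos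

lemma pow_norm_tendsto_zero {A : Type*} [NormedRing A] [NormedAlgebra ℂ A] [CompleteSpace A]
    (a : A) (h : spectralRadius ℂ a < 1) :
    Tendsto (fun k : ℕ => ‖a ^ k‖) atTop (nhds 0) := by
  obtain ⟨r, hr1, hr2⟩ := ENNReal.lt_iff_exists_nnreal_btwn.mp h
  have hgel := spectrum.pow_nnnorm_pow_one_div_tendsto_nhds_spectralRadius a
  have hev : ∀ᶠ k : ℕ in atTop, ((‖a ^ k‖₊ : ℝ≥0∞) ^ (1 / k : ℝ)) < r :=
    hgel.eventually_lt_const hr1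
  have hr2' : (r : ℝ) < 1 := by exact_mod_cast hr2
  have hbound : ∀ᶠ k : ℕ in atTop, ‖a ^ k‖ ≤ (r : ℝ) ^ k := by
    filter_upwards [hev, eventually_ge_atTop 1] with k hk hk1
    have hk0 : (k : ℝ) ≠ 0 := by positivity
    have h3 : ((‖a ^ k‖₊ : ℝ≥0∞) ^ (1 / k : ℝ)) ^ (k : ℝ) ≤ (r : ℝ≥0∞) ^ (k : ℝ) :=
      ENNReal.rpow_le_rpow hk.le (by positivity)
    rw [← ENNReal.rpow_mul, one_div, inv_mul_cancel₀ hk0, ENNReal.rpow_one,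
      ENNReal.rpow_natCast] at h3
    have h4 : (‖a ^ k‖₊ : ℝ≥0∞) ≤ ((r ^ k : ℝ≥0) : ℝ≥0∞) := by
      rw [ENNReal.coe_pow]; exact_mod_cast h3
    have h5 : ‖a ^ k‖₊ ≤ r ^ k := by exact_mod_cast h4
    calc ‖a ^ k‖ = (‖a ^ k‖₊ : ℝ) := rfl
      _ ≤ ((r ^ k : ℝ≥0) : ℝ) := by exact_mod_cast h5
      _ = (r : ℝ) ^ k := by push_cast; ring
  have hpow : Tendsto (fun k : ℕ => (r : ℝ) ^ k) atTop (nhds 0) :=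
    tendsto_pow_atTop_nhds_zero_of_lt_one r.coe_nonneg hr2'
  refine tendsto_of_tendsto_of_tendsto_of_le_of_le' tendsto_const_nhds hpow ?_ hbound
  exact Eventually.of_forall fun k => norm_nonneg _


lemma diag_mulVec_norm_le (e : n → ℂ) (m : ℝ) (hm : 0 ≤ m) (h : ∀ i, ‖e i‖ ≤ m)
    (v : n → ℂ) :
    ‖((WithLp.equiv 2 (n → ℂ)).symm ((Matrix.diagonal e) *ᵥ v) : EuclideanSpace ℂ n)‖ ≤
      m * ‖((WithLp.equiv 2 (n → ℂ)).symm v : EuclideanSpace ℂ n)‖ := by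
  rw [EuclideanSpace.norm_eq, EuclideanSpace.norm_eq]
  have key : ∑ i, ‖((WithLp.equiv 2 (n → ℂ)).symm ((Matrix.diagonal e) *ᵥ v) :
      EuclideanSpace ℂ n) i‖ ^ 2 ≤ m ^ 2 * ∑ i, ‖((WithLp.equiv 2 (n → ℂ)).symm v :
      EuclideanSpace ℂ n) i‖ ^ 2 := by
    rw [Finset.mul_sum]
    refine Finset.sum_le_sum fun i _ => ?_
    have h1 : ((WithLp.equiv 2 (n → ℂ)).symm ((Matrix.diagonal e) *ᵥ v) :
        EuclideanSpace ℂ n) i = e i * v i := by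
      simp [Matrix.mulVec_diagonal]
    rw [h1]
    have h2 : ((WithLp.equiv 2 (n → ℂ)).symm v : EuclideanSpace ℂ n) i = v i := rfl
    rw [h2, norm_mul, mul_pow]
    have := h i
    have hsq : ‖e i‖ ^ 2 ≤ m ^ 2 := by nlinarith [norm_nonneg (e i)]
    exact mul_le_mul_of_nonneg_right hsq (sq_nonneg _)
  calc Real.sqrt (∑ i, ‖((WithLp.equiv 2 (n → ℂ)).symm ((Matrix.diagonal e) *ᵥ v) :
        EuclideanSpace ℂ n) i‖ ^ 2)
      ≤ Real.sqrt (m ^ 2 * ∑ i, ‖((WithLp.equiv 2 (n → ℂ)).symm v :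
        EuclideanSpace ℂ n) i‖ ^ 2) := Real.sqrt_le_sqrt key
    _ = m * Real.sqrt (∑ i, ‖((WithLp.equiv 2 (n → ℂ)).symm v :
        EuclideanSpace ℂ n) i‖ ^ 2) := by
        rw [Real.sqrt_mul (sq_nonneg m), Real.sqrt_sq hm]

lemma bauer_fike (AC Δ V : Matrix n n ℂ) (hV : IsUnit V)
    (hdiag : (V⁻¹ * AC * V).IsDiag) (μ : ℂ) (x : n → ℂ) (hx : x ≠ 0)
    (heig : (AC + Δ).mulVec x = μ • x) :
    ∃ i, ‖μ - (V⁻¹ * AC * V) i i‖ ≤ ‖V‖ * ‖V⁻¹‖ * ‖Δ‖ := by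
  by_contra hcon
  push_neg at hcon
  set d : n → ℂ := fun i => (V⁻¹ * AC * V) i i with hd
  set c : ℝ := ‖V‖ * ‖V⁻¹‖ * ‖Δ‖ with hc
  have hc0 : 0 ≤ c := by positivity
  have hdet : IsUnit V.det := (Matrix.isUnit_iff_isUnit_det V).mp hV
  have hVV : V * V⁻¹ = 1 := Matrix.mul_nonsing_inv V hdet
  have hVV' : V⁻¹ * V = 1 := Matrix.nonsing_inv_mul V hdet
  have hne : Nonempty n := by
    by_contra hn
    exact hx (funext fun i => absurd ⟨i⟩ hn)
  -- the minimum of ‖μ - d i‖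
  obtain ⟨i₀, -, hi₀⟩ := Finset.exists_min_image Finset.univ (fun i => ‖μ - d i‖)
    ⟨Classical.arbitrary n, Finset.mem_univ _⟩
  set m : ℝ := ‖μ - d i₀‖ with hmdef
  have hcm : c < m := hcon i₀
  have hm0 : 0 < m := lt_of_le_of_lt hc0 hcm
  have hmin : ∀ i, m ≤ ‖μ - d i‖ := fun i => hi₀ i (Finset.mem_univ i)
  have hdne : ∀ i, μ - d i ≠ 0 := fun i => by
    intro h0
    have := hmin i
    rw [h0, norm_zero] at this
    linarith
  have hD : (V⁻¹ * AC * V) = Matrix.diagonal d := hdiag.diagonal_diag.symm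
  set E : Matrix n n ℂ := Matrix.diagonal (fun i => (μ - d i)⁻¹) with hE
  have hsub : μ • (1 : Matrix n n ℂ) - (V⁻¹ * AC * V) = Matrix.diagonal (fun i => μ - d i) := by
    rw [hD]
    ext i j
    by_cases h : i = j <;> simp [Matrix.diagonal, Matrix.one_apply, h]
  have hE1 : E * (μ • (1 : Matrix n n ℂ) - (V⁻¹ * AC * V)) = 1 := by
    rw [hsub, hE, Matrix.diagonal_mul_diagonal, ← Matrix.diagonal_one]
    exact congrArg Matrix.diagonal (funext fun i => inv_mul_cancel₀ (hdne i))
  have hVA : AC = V * (V⁻¹ * AC * V) * V⁻¹ := by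
    calc AC = (V * V⁻¹) * AC * (V * V⁻¹) := by rw [hVV, one_mul, mul_one]
    _ = V * (V⁻¹ * AC * V) * V⁻¹ := by noncomm_ring
  -- (μ•1 - AC) x = Δ x
  have h1 : (μ • (1 : Matrix n n ℂ) - AC).mulVec x = Δ.mulVec x := by
    rw [Matrix.sub_mulVec, Matrix.smul_mulVec, Matrix.one_mulVec, ← heig,
      Matrix.add_mulVec, add_sub_cancel_left]
  -- transfer through V
  have h2 : μ • (1 : Matrix n n ℂ) - AC = V * (μ • (1 : Matrix n n ℂ) - (V⁻¹ * AC * V)) * V⁻¹ := by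
    rw [mul_sub, sub_mul]
    rw [mul_smul_comm, smul_mul_assoc, mul_one, hVV]
    rw [← Matrix.mul_assoc, ← Matrix.mul_assoc] at hVA ⊢
    rw [← hVA]
  have h3 : (μ • (1 : Matrix n n ℂ) - (V⁻¹ * AC * V)).mulVec (V⁻¹.mulVec x)
      = V⁻¹.mulVec (Δ.mulVec x) := by
    rw [← h1, h2]
    rw [Matrix.mulVec_mulVec, Matrix.mulVec_mulVec, ← Matrix.mul_assoc, ← Matrix.mul_assoc,
      hVV', one_mul]
  have h4 : V⁻¹.mulVec x = E.mulVec (V⁻¹.mulVec (Δ.mulVec x)) := by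
    rw [← h3, Matrix.mulVec_mulVec, hE1, Matrix.one_mulVec]
  have h5 : x = V.mulVec (E.mulVec (V⁻¹.mulVec (Δ.mulVec x))) := by
    rw [← h4, Matrix.mulVec_mulVec, hVV, Matrix.one_mulVec]
  -- norms
  set Nv : (n → ℂ) → ℝ := fun v => ‖((WithLp.equiv 2 (n → ℂ)).symm v : EuclideanSpace ℂ n)‖
    with hNv
  have hNop : ∀ (M : Matrix n n ℂ) (v : n → ℂ), Nv (M.mulVec v) ≤ ‖M‖ * Nv v := fun M v =>
    M.l2_opNorm_mulVec ((WithLp.equiv 2 (n → ℂ)).symm v)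
  have hNE : ∀ v : n → ℂ, Nv (E.mulVec v) ≤ m⁻¹ * Nv v := by
    intro v
    refine diag_mulVec_norm_le _ _ (by positivity) (fun i => ?_) v
    rw [norm_inv]
    exact inv_anti₀ hm0 (hmin i)
  have hNx : 0 < Nv x := by
    rw [hNv]
    simp only [norm_pos_iff]
    simpa using hx
  have chain : Nv x ≤ ‖V‖ * (m⁻¹ * (‖V⁻¹‖ * (‖Δ‖ * Nv x))) := by
    calc Nv x = Nv (V.mulVec (E.mulVec (V⁻¹.mulVec (Δ.mulVec x)))) := by rw [← h5]
    _ ≤ ‖V‖ * Nv (E.mulVec (V⁻¹.mulVec (Δ.mulVec x))) := hNop _ _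
    _ ≤ ‖V‖ * (m⁻¹ * Nv (V⁻¹.mulVec (Δ.mulVec x))) :=
        mul_le_mul_of_nonneg_left (hNE _) (norm_nonneg _)
    _ ≤ ‖V‖ * (m⁻¹ * (‖V⁻¹‖ * Nv (Δ.mulVec x))) := by
        refine mul_le_mul_of_nonneg_left ?_ (norm_nonneg _)
        exact mul_le_mul_of_nonneg_left (hNop _ _) (by positivity)
    _ ≤ ‖V‖ * (m⁻¹ * (‖V⁻¹‖ * (‖Δ‖ * Nv x))) := by
        refine mul_le_mul_of_nonneg_left ?_ (norm_nonneg _)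
        refine mul_le_mul_of_nonneg_left ?_ (by positivity)
        exact mul_le_mul_of_nonneg_left (hNop _ _) (norm_nonneg _)
  have chain' : Nv x ≤ (c * m⁻¹) * Nv x := by
    calc Nv x ≤ ‖V‖ * (m⁻¹ * (‖V⁻¹‖ * (‖Δ‖ * Nv x))) := chain
    _ = (c * m⁻¹) * Nv x := by rw [hc]; ring
  have hcm1 : c * m⁻¹ < 1 := by
    rw [← mul_inv_cancel₀ hm0.ne']
    exact mul_lt_mul_of_pos_right hcm (inv_pos.mpr hm0)
  have : (c * m⁻¹) * Nv x < Nv x := by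
    calc (c * m⁻¹) * Nv x < 1 * Nv x := mul_lt_mul_of_pos_right hcm1 hNx
    _ = Nv x := one_mul _
  linarith

lemma diag_entry_is_eig (AC V : Matrix n n ℂ) (hV : IsUnit V)
    (hdiag : (V⁻¹ * AC * V).IsDiag) (i : n) :
    ∃ v : n → ℂ, v ≠ 0 ∧ AC.mulVec v = ((V⁻¹ * AC * V) i i) • v := by
  have hdet : IsUnit V.det := (Matrix.isUnit_iff_isUnit_det V).mp hV
  have hVV : V * V⁻¹ = 1 := Matrix.mul_nonsing_inv V hdet
  have hVV' : V⁻¹ * V = 1 := Matrix.nonsing_inv_mul V hdet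
  set d : n → ℂ := fun i => (V⁻¹ * AC * V) i i with hd
  have hD : (V⁻¹ * AC * V) = Matrix.diagonal d := hdiag.diagonal_diag.symm
  refine ⟨V.mulVec (Pi.single i 1), ?_, ?_⟩
  · intro h0
    have : (Pi.single i 1 : n → ℂ) = 0 := by
      have := congrArg (V⁻¹.mulVec) h0
      rwa [Matrix.mulVec_mulVec, hVV', Matrix.one_mulVec, Matrix.mulVec_zero] at this
    have h1 : (1 : ℂ) = 0 := by simpa using congrFun this i
    exact one_ne_zero h1
  · have hVA : AC = V * (V⁻¹ * AC * V) * V⁻¹ := by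
      calc AC = (V * V⁻¹) * AC * (V * V⁻¹) := by rw [hVV, one_mul, mul_one]
      _ = V * (V⁻¹ * AC * V) * V⁻¹ := by noncomm_ring
    have hsingle : (Matrix.diagonal d) *ᵥ (Pi.single i 1 : n → ℂ) = d i • (Pi.single i 1 : n → ℂ) := by
      rw [Matrix.diagonal_mulVec_single]
      funext j
      by_cases h : j = i <;> simp [Pi.single_apply, h]
    conv_lhs => rw [hVA]
    rw [Matrix.mulVec_mulVec]
    have hassoc : (V * (V⁻¹ * AC * V) * V⁻¹) * V = V * (V⁻¹ * AC * V) := by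
      rw [Matrix.mul_assoc (V * (V⁻¹ * AC * V)) V⁻¹ V, hVV', Matrix.mul_one]
    rw [hassoc, ← Matrix.mulVec_mulVec, hD, hsingle, Matrix.mulVec_smul, Matrix.diagonal_apply_eq]


lemma coord_le_norm (x : EuclideanSpace ℂ n) (i : n) : ‖x i‖ ≤ ‖x‖ := by
  rw [EuclideanSpace.norm_eq]
  rw [show ‖x i‖ = Real.sqrt (‖x i‖ ^ 2) from (Real.sqrt_sq (norm_nonneg _)).symm]
  exact Real.sqrt_le_sqrt (Finset.single_le_sum (f := fun j => ‖x j‖ ^ 2)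
    (fun j _ => sq_nonneg _) (Finset.mem_univ i))

lemma matrix_map_pow (P : Matrix n n ℝ) (k : ℕ) :
    (P ^ k).map Complex.ofReal = (P.map Complex.ofReal) ^ k := by
  induction k with
  | zero =>
    simp [Matrix.map_one Complex.ofReal Complex.ofReal_zero Complex.ofReal_one]
  | succ k ih =>
    rw [pow_succ, pow_succ, ← ih]
    exact Matrix.map_mul (f := Complex.ofRealHom)


end Aux

theorem stmt0 (d : ℕ) (hd : 0 < d)
    (A : Matrix (Fin d) (Fin d) ℝ) (B K ε : Fin d → ℝ) (g : ℝ) (hg : g ≠ 0)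
    -- the nominal closed-loop matrix A_C
    (AC : Matrix (Fin d ⊕ Fin 1) (Fin d ⊕ Fin 1) ℝ)
    (hAC : AC = Matrix.fromBlocks
      (A + Matrix.of fun i j => B i * K j)
      (Matrix.of fun i (_ : Fin 1) => g * B i)
      (Matrix.of fun (_ : Fin 1) j => K j)
      (Matrix.of fun (_ _ : Fin 1) => 1 + g))
    -- the modelling uncertainty
    (ΔA : Matrix (Fin d) (Fin d) ℝ) (ΔB : Fin d → ℝ)
    (ΔAC : Matrix (Fin d ⊕ Fin 1) (Fin d ⊕ Fin 1) ℝ)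
    (hΔAC : ΔAC = Matrix.fromBlocks
      (ΔA + Matrix.of fun i j => ΔB i * K j)
      (Matrix.of fun i (_ : Fin 1) => g * ΔB i)
      (0 : Matrix (Fin 1) (Fin d) ℝ)
      (0 : Matrix (Fin 1) (Fin 1) ℝ))
    -- A_C is diagonalizable via the invertible complex matrix V
    (V : Matrix (Fin d ⊕ Fin 1) (Fin d ⊕ Fin 1) ℂ) (hV : IsUnit V)
    (hdiag : (V⁻¹ * AC.map Complex.ofReal * V).IsDiag)
    -- spectral radius of A_C strictly less than 1
    (hρ : specRad (AC.map Complex.ofReal) < 1)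
    -- Bauer–Fike smallness condition on the uncertainty
    (hbound : l2OpNorm V * l2OpNorm V⁻¹ * l2OpNorm (ΔAC.map Complex.ofReal)
      < 1 - specRad (AC.map Complex.ofReal))
    -- the actual closed-loop dynamics
    (y' : ℕ → Fin d → ℝ) (w : ℕ → ℝ) (u : ℕ → ℝ)
    (hu : ∀ k, u k = K ⬝ᵥ (y' k - ε) + g * w k)
    (hy : ∀ k, y' (k + 1) = (A + ΔA).mulVec (y' k) + u k • (B + ΔB))
    (hw : ∀ k, w (k + 1) = w k + u k) :
    Tendsto y' atTop (nhds 0) ∧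
    Tendsto w atTop (nhds ((1 / g) * (K ⬝ᵥ ε))) ∧
    Tendsto u atTop (nhds 0) := by
  classical
  obtain ⟨c0, hgc0, hc0⟩ : ∃ c0, g * c0 = K ⬝ᵥ ε ∧ c0 = (1 / g) * (K ⬝ᵥ ε) :=
    ⟨(1 / g) * (K ⬝ᵥ ε), by field_simp, rfl⟩
  set M : Matrix (Fin d ⊕ Fin 1) (Fin d ⊕ Fin 1) ℝ := AC + ΔAC with hM
  set z : ℕ → (Fin d ⊕ Fin 1) → ℝ := fun k => Sum.elim (y' k) (fun _ => w k - c0) with hzdef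
  have hu' : ∀ k, u k = K ⬝ᵥ (y' k) + g * (w k - c0) := by
    intro k
    rw [hu k, dotProduct_sub, mul_sub, hgc0]
    ring
  -- the closed-loop recursion
  have hz : ∀ k, z (k + 1) = M *ᵥ z k := by
    intro k
    funext j
    cases j with
    | inl i =>
      show y' (k + 1) i = _
      rw [hy k]
      simp only [hM, hAC, hΔAC, Matrix.mulVec, dotProduct, Fintype.sum_sum_type,
        Matrix.add_apply, Matrix.fromBlocks_apply₁₁, Matrix.fromBlocks_apply₁₂, Matrix.of_apply,
        Sum.elim_inl, Sum.elim_inr, Pi.add_apply, Matrix.zero_apply, Fin.sum_univ_one,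
        Pi.smul_apply, smul_eq_mul, Pi.sub_apply]
      rw [hu' k]
      simp only [hzdef, Sum.elim_inl, Sum.elim_inr, dotProduct]
      have hsplit : ∑ x, (A i x + B i * K x + (ΔA i x + ΔB i * K x)) * y' k x
          = (∑ x, (A i x + ΔA i x) * y' k x) + (B i + ΔB i) * ∑ x, K x * y' k x := by
        rw [Finset.mul_sum, ← Finset.sum_add_distrib]
        exact Finset.sum_congr rfl fun x _ => by ring
      rw [hsplit]
      ring
    | inr i =>
      show w (k + 1) - c0 = _
      rw [hw k]
      simp only [hM, hAC, hΔAC, Matrix.mulVec, dotProduct, Fintype.sum_sum_type,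
        Matrix.add_apply, Matrix.fromBlocks_apply₂₁, Matrix.fromBlocks_apply₂₂, Matrix.of_apply,
        Sum.elim_inl, Sum.elim_inr, Pi.add_apply, Matrix.zero_apply, Fin.sum_univ_one]
      rw [hu' k]
      simp only [hzdef, Sum.elim_inl, Sum.elim_inr, dotProduct]
      ring
  have hzk : ∀ k, z k = (M ^ k) *ᵥ z 0 := by
    intro k
    induction k with
    | zero => rw [pow_zero, Matrix.one_mulVec]
    | succ k ih => rw [hz k, ih, Matrix.mulVec_mulVec, ← pow_succ']
  set Mc : Matrix (Fin d ⊕ Fin 1) (Fin d ⊕ Fin 1) ℂ := M.map Complex.ofReal with hMc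
  have hMcsplit : Mc = AC.map Complex.ofReal + ΔAC.map Complex.ofReal := by
    rw [hMc, hM]
    ext i j
    simp [Matrix.map_apply, Matrix.add_apply]
  have heig_lt : ∀ μ : ℂ, (∃ v, v ≠ 0 ∧ Mc *ᵥ v = μ • v) → ‖μ‖ < 1 := by
    rintro μ ⟨v, hv, hMv⟩
    rw [hMcsplit] at hMv
    obtain ⟨i, hi⟩ := bauer_fike (AC.map Complex.ofReal) (ΔAC.map Complex.ofReal) V hV hdiag
      μ v hv hMv
    obtain ⟨v2, hv2, hv2e⟩ := diag_entry_is_eig (AC.map Complex.ofReal) V hV hdiag i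
    have hbdd : BddAbove {r : ℝ | ∃ μ' : ℂ, (∃ v' : (Fin d ⊕ Fin 1) → ℂ, v' ≠ 0 ∧
        (AC.map Complex.ofReal) *ᵥ v' = μ' • v') ∧ r = ‖μ'‖} := by
      refine ⟨‖AC.map Complex.ofReal‖, ?_⟩
      rintro r ⟨μ', ⟨v', hv', hve'⟩, rfl⟩
      exact eig_le_norm _ _ _ hv' hve'
    have hDii : ‖(V⁻¹ * AC.map Complex.ofReal * V) i i‖ ≤ specRad (AC.map Complex.ofReal) :=
      le_csSup hbdd ⟨(V⁻¹ * AC.map Complex.ofReal * V) i i, ⟨v2, hv2, hv2e⟩, rfl⟩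
    have hnorm_eq : ∀ X : Matrix (Fin d ⊕ Fin 1) (Fin d ⊕ Fin 1) ℂ, l2OpNorm X = ‖X‖ :=
      fun _ => rfl
    rw [hnorm_eq, hnorm_eq, hnorm_eq] at hbound
    have htri : ‖μ‖ ≤ ‖μ - (V⁻¹ * AC.map Complex.ofReal * V) i i‖ +
        ‖(V⁻¹ * AC.map Complex.ofReal * V) i i‖ := by
      simpa using norm_add_le (μ - (V⁻¹ * AC.map Complex.ofReal * V) i i)
        ((V⁻¹ * AC.map Complex.ofReal * V) i i)
    linarith
  haveI : Nonempty (Fin d ⊕ Fin 1) := ⟨Sum.inr 0⟩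
  haveI : CompleteSpace (Matrix (Fin d ⊕ Fin 1) (Fin d ⊕ Fin 1) ℂ) :=
    FiniteDimensional.complete ℂ _
  have hspec : spectralRadius ℂ Mc < 1 := by
    obtain ⟨zz, hzz, hzzr⟩ := spectrum.exists_nnnorm_eq_spectralRadius (a := Mc)
    rw [← hzzr]
    obtain ⟨v, hv, hMv⟩ := (eig_iff_spectrum Mc zz).mpr hzz
    have hlt := heig_lt zz ⟨v, hv, hMv⟩
    rw [← ENNReal.coe_one, ENNReal.coe_lt_coe, ← NNReal.coe_lt_coe]
    simpa using hlt
  have hnorm0 : Tendsto (fun k => ‖Mc ^ k‖) atTop (nhds 0) := pow_norm_tendsto_zero Mc hspec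
  set zc0 : (Fin d ⊕ Fin 1) → ℂ := fun j => ((z 0 j : ℝ) : ℂ) with hzc0
  set C : ℝ := ‖((WithLp.equiv 2 ((Fin d ⊕ Fin 1) → ℂ)).symm zc0 :
    EuclideanSpace ℂ (Fin d ⊕ Fin 1))‖ with hC
  have hcomp : ∀ i, Tendsto (fun k => z k i) atTop (nhds 0) := by
    intro i
    refine squeeze_zero_norm (a := fun k => ‖Mc ^ k‖ * C) (fun k => ?_) ?_
    · have h1 : ((z k i : ℝ) : ℂ) = ((Mc ^ k) *ᵥ zc0) i := by
        rw [hzk k, hMc, ← matrix_map_pow]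
        exact RingHom.map_mulVec Complex.ofRealHom (M ^ k) (z 0) i
      have h2 : ‖z k i‖ = ‖((z k i : ℝ) : ℂ)‖ := by
        rw [Complex.norm_real]
      rw [h2, h1]
      calc ‖((Mc ^ k) *ᵥ zc0) i‖
          ≤ ‖((WithLp.equiv 2 ((Fin d ⊕ Fin 1) → ℂ)).symm ((Mc ^ k) *ᵥ zc0) :
            EuclideanSpace ℂ (Fin d ⊕ Fin 1))‖ :=
          coord_le_norm ((WithLp.equiv 2 ((Fin d ⊕ Fin 1) → ℂ)).symm ((Mc ^ k) *ᵥ zc0)) i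
        _ ≤ ‖Mc ^ k‖ * C := (Mc ^ k).l2_opNorm_mulVec
            ((WithLp.equiv 2 ((Fin d ⊕ Fin 1) → ℂ)).symm zc0)
    · simpa using hnorm0.mul_const C
  have hYi : ∀ i, Tendsto (fun k => y' k i) atTop (nhds 0) := fun i => by
    simpa [hzdef] using hcomp (Sum.inl i)
  have hW0 : Tendsto (fun k => w k - c0) atTop (nhds 0) := by
    simpa [hzdef] using hcomp (Sum.inr 0)
  refine ⟨?_, ?_, ?_⟩
  · rw [tendsto_pi_nhds]
    intro i
    simpa using hYi i
  · have h := hW0.add_const c0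
    simp only [sub_add_cancel, zero_add] at h
    rw [hc0] at h
    exact h
  · have hKy : Tendsto (fun k => K ⬝ᵥ y' k) atTop (nhds 0) := by
      have hsum : Tendsto (fun k => ∑ i, K i * y' k i) atTop (nhds (∑ _i : Fin d, (0 : ℝ))) :=
        tendsto_finset_sum _ fun i _ => by simpa using (hYi i).const_mul (K i)
      simpa [dotProduct] using hsum
    have hcomb : Tendsto (fun k => K ⬝ᵥ y' k + g * (w k - c0)) atTop (nhds (0 + g * 0)) :=
      hKy.add (hW0.const_mul g)
    have hufun : u = fun k => K ⬝ᵥ y' k + g * (w k - c0) := funext hu'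
    rw [hufun]
    simpa using hcomb
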